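/- Uniform one-step TV bound on the policy value gap: Let P and P̂ be two transition kernels on the same finite MDP (reward r with 0 ≤ r ≤ R_max, discount γ ∈ (0,1), initial distribution ρ₀). Then for every stationary policy π, |V_π(P) − V_π(P̂)| ≤ (R_max/(1−γ)²) · max_{(s,a)} TV(P(·|s,a), P̂(·|s,a)). -/

import Mathlib

open Finset Real

/-- `p` is a probability mass function on a finite type. -/
def IsPMF {X : Type*} [Fintype X] (p : X → ℝ) : Prop :=
  (∀ x, 0 ≤ p x) ∧ ∑ x, p x = 1

/-- `P` is a transition kernel: each `P s a` is a pmf on states. -/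
def IsKernel {S A : Type*} [Fintype S] [Fintype A] (P : S → A → S → ℝ) : Prop :=
  ∀ s a, IsPMF (P s a)

/-- `pol` is a stationary policy: each `pol s` is a pmf on actions. -/
def IsPolicy {S A : Type*} [Fintype S] [Fintype A] (pol : S → A → ℝ) : Prop :=
  ∀ s, IsPMF (pol s)

/-- `V` satisfies the Bellman evaluation equation for policy `pol` under kernel `P`,
reward `r` and discount `γ`. -/
def IsValue {S A : Type*} [Fintype S] [Fintype A] (P : S → A → S → ℝ) (pol : S → A → ℝ)
    (r : S → A → ℝ) (γ : ℝ) (V : S → ℝ) : Prop :=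
  ∀ s, V s = ∑ a, pol s a * (r s a + γ * ∑ s', P s a s' * V s')

/-- `d` is the (unnormalized) discounted state-action occupancy of `pol` under kernel `P`
with initial distribution `ρ₀` and discount `γ`. -/
def IsOcc {S A : Type*} [Fintype S] [Fintype A] (P : S → A → S → ℝ) (pol : S → A → ℝ)
    (ρ₀ : S → ℝ) (γ : ℝ) (d : S → A → ℝ) : Prop :=
  ∀ s a, d s a = pol s a * (ρ₀ s + γ * ∑ x : S × A, d x.1 x.2 * P x.1 x.2 s)

/-- ℓ₁ distance between two pmfs on a finite type. -/
noncomputable def l1Dist {X : Type*} [Fintype X] (p q : X → ℝ) : ℝ :=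
  ∑ x, |p x - q x|

/-- Total variation distance between two pmfs on a finite type. -/
noncomputable def tvDist {X : Type*} [Fintype X] (p q : X → ℝ) : ℝ :=
  (1 / 2) * ∑ x, |p x - q x|

/-- Kullback-Leibler divergence between two pmfs on a finite type (finite under
absolute continuity). -/
noncomputable def klF {X : Type*} [Fintype X] (p q : X → ℝ) : ℝ :=
  ∑ x, p x * Real.log (p x / q x)

/-- `d_data` satisfies κ-coverage for the policy set `Pol` under kernel `P`:
every occupancy of a policy in `Pol` is dominated by `κ · d_data`. -/
def KappaCoverage {S A : Type*} [Fintype S] [Fintype A] (P : S → A → S → ℝ) (ρ₀ : S → ℝ)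
    (γ : ℝ) (Pol : Set (S → A → ℝ)) (ddata : S → A → ℝ) (κ : ℝ) : Prop :=
  ∀ pol ∈ Pol, ∀ dpol : S → A → ℝ, IsOcc P pol ρ₀ γ dpol → ∀ s a, dpol s a ≤ κ * ddata s a

/-- Critic discrepancy `Δ_{D,P̂}(s,a)`. -/
noncomputable def critDelta {S A : Type*} [Fintype S] (P Phat : S → A → S → ℝ)
    (D : S → A → S → ℝ) (s : S) (a : A) : ℝ :=
  (∑ s', P s a s' * D s a s') - ∑ s', Phat s a s' * D s a s'

/-- Supremum over the critic class of the critic discrepancy at `(s,a)`. -/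
noncomputable def critSup {S A : Type*} [Fintype S] (𝒟 : Set (S → A → S → ℝ))
    (P Phat : S → A → S → ℝ) (s : S) (a : A) : ℝ :=
  sSup {y | ∃ D ∈ 𝒟, y = critDelta P Phat D s a}

lemma value_bounds {S A : Type*} [Fintype S] [Fintype A] [Nonempty S] [Nonempty A]
    (P : S → A → S → ℝ) (hP : IsKernel P)
    (r : S → A → ℝ) (Rmax : ℝ) (hr : ∀ s a, 0 ≤ r s a ∧ r s a ≤ Rmax)
    (γ : ℝ) (hγ0 : 0 < γ) (hγ1 : γ < 1)
    (pol : S → A → ℝ) (hpol : IsPolicy pol)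
    (V : S → ℝ) (hV : IsValue P pol r γ V) :
    ∀ s, 0 ≤ V s ∧ V s ≤ Rmax / (1 - γ) := by
  have h1γ : (0:ℝ) < 1 - γ := by linarith
  obtain ⟨sM, -, hsM⟩ := Finset.exists_max_image Finset.univ V Finset.univ_nonempty
  obtain ⟨sm, -, hsm⟩ := Finset.exists_min_image Finset.univ V Finset.univ_nonempty
  have hub : V sM ≤ Rmax / (1 - γ) := by
    have key : V sM ≤ Rmax + γ * V sM := by
      calc V sM = ∑ a, pol sM a * (r sM a + γ * ∑ s', P sM a s' * V s') := hV sM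
        _ ≤ ∑ a, pol sM a * (Rmax + γ * V sM) := by
            refine Finset.sum_le_sum fun a _ => mul_le_mul_of_nonneg_left ?_ ((hpol sM).1 a)
            have h1 : ∑ s', P sM a s' * V s' ≤ V sM := by
              calc ∑ s', P sM a s' * V s' ≤ ∑ s', P sM a s' * V sM :=
                    Finset.sum_le_sum fun s' _ =>
                      mul_le_mul_of_nonneg_left (hsM s' (Finset.mem_univ s')) ((hP sM a).1 s')
                _ = V sM := by rw [← Finset.sum_mul, (hP sM a).2, one_mul]
            have := (hr sM a).2
            nlinarith
        _ = Rmax + γ * V sM := by rw [← Finset.sum_mul, (hpol sM).2, one_mul]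
    rw [le_div_iff₀ h1γ]; nlinarith
  have hlb : 0 ≤ V sm := by
    have key : γ * V sm ≤ V sm := by
      calc γ * V sm = ∑ a, pol sm a * (γ * V sm) := by
            rw [← Finset.sum_mul, (hpol sm).2, one_mul]
        _ ≤ ∑ a, pol sm a * (r sm a + γ * ∑ s', P sm a s' * V s') := by
            refine Finset.sum_le_sum fun a _ => mul_le_mul_of_nonneg_left ?_ ((hpol sm).1 a)
            have h1 : V sm ≤ ∑ s', P sm a s' * V s' := by
              calc V sm = ∑ s', P sm a s' * V sm := by
                    rw [← Finset.sum_mul, (hP sm a).2, one_mul]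
                _ ≤ ∑ s', P sm a s' * V s' :=
                    Finset.sum_le_sum fun s' _ =>
                      mul_le_mul_of_nonneg_left (hsm s' (Finset.mem_univ s')) ((hP sm a).1 s')
            have := (hr sm a).1
            nlinarith
        _ = V sm := (hV sm).symm
    nlinarith
  exact fun s => ⟨le_trans hlb (hsm s (Finset.mem_univ s)),
    le_trans (hsM s (Finset.mem_univ s)) hub⟩

/-- **Uniform one-step TV bound on the policy value gap.** -/
theorem uniform_tv_value_gap
    {S A : Type*} [Fintype S] [Fintype A] [Nonempty S] [Nonempty A]
    (P Phat : S → A → S → ℝ) (hP : IsKernel P) (hPhat : IsKernel Phat)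
    (r : S → A → ℝ) (Rmax : ℝ) (hr : ∀ s a, 0 ≤ r s a ∧ r s a ≤ Rmax)
    (γ : ℝ) (hγ0 : 0 < γ) (hγ1 : γ < 1)
    (ρ₀ : S → ℝ) (hρ : IsPMF ρ₀)
    (pol : S → A → ℝ) (hpol : IsPolicy pol)
    (V Vhat : S → ℝ) (hV : IsValue P pol r γ V) (hVhat : IsValue Phat pol r γ Vhat) :
    |(∑ s, ρ₀ s * V s) - ∑ s, ρ₀ s * Vhat s| ≤
      Rmax / (1 - γ) ^ 2 * ⨆ x : S × A, tvDist (P x.1 x.2) (Phat x.1 x.2) := by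
  have h1γ : (0:ℝ) < 1 - γ := by linarith
  obtain ⟨s₀⟩ := ‹Nonempty S›
  obtain ⟨a₀⟩ := ‹Nonempty A›
  have hRmax : 0 ≤ Rmax := le_trans (hr s₀ a₀).1 (hr s₀ a₀).2
  set ε := ⨆ x : S × A, tvDist (P x.1 x.2) (Phat x.1 x.2) with hεdef
  have hbdd : BddAbove (Set.range fun x : S × A => tvDist (P x.1 x.2) (Phat x.1 x.2)) :=
    Set.Finite.bddAbove (Set.finite_range _)
  have hεle : ∀ s a, tvDist (P s a) (Phat s a) ≤ ε := fun s a => le_ciSup hbdd (s, a)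
  have htv0 : ∀ s a, 0 ≤ tvDist (P s a) (Phat s a) := fun s a => by
    unfold tvDist
    positivity
  have hε0 : 0 ≤ ε := le_trans (htv0 s₀ a₀) (hεle s₀ a₀)
  -- value bounds
  have hVb := value_bounds P hP r Rmax hr γ hγ0 hγ1 pol hpol V hV
  -- max of |V - Vhat|
  obtain ⟨z, -, hz⟩ := Finset.exists_max_image Finset.univ (fun s => |V s - Vhat s|)
    Finset.univ_nonempty
  set Δ := |V z - Vhat z| with hΔdef
  have hΔall : ∀ s, |V s - Vhat s| ≤ Δ := fun s => hz s (Finset.mem_univ s)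
  have hΔ0 : 0 ≤ Δ := abs_nonneg _
  -- key decomposition
  have hdiff : ∀ s, V s - Vhat s = ∑ a, pol s a * γ *
      ((∑ s', (P s a s' - Phat s a s') * V s') + ∑ s', Phat s a s' * (V s' - Vhat s')) := by
    intro s
    rw [hV s, hVhat s, ← Finset.sum_sub_distrib]
    refine Finset.sum_congr rfl fun a _ => ?_
    have h1 : (∑ s', (P s a s' - Phat s a s') * V s') + ∑ s', Phat s a s' * (V s' - Vhat s')
        = (∑ s', P s a s' * V s') - ∑ s', Phat s a s' * Vhat s' := by
      rw [← Finset.sum_add_distrib, ← Finset.sum_sub_distrib]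
      exact Finset.sum_congr rfl fun s' _ => by ring
    rw [h1]; ring
  -- bound on the model-error term
  have hterm1 : ∀ s a, |∑ s', (P s a s' - Phat s a s') * V s'| ≤ Rmax / (1 - γ) * ε := by
    intro s a
    set c := Rmax / (2 * (1 - γ)) with hcdef
    have hc0 : 0 ≤ c := by positivity
    have h2c : 2 * c = Rmax / (1 - γ) := by rw [hcdef]; field_simp
    have hzero : ∑ s', (P s a s' - Phat s a s') = 0 := by
      rw [Finset.sum_sub_distrib, (hP s a).2, (hPhat s a).2, sub_self]
    have hc : ∑ s', (P s a s' - Phat s a s') * V s'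
        = ∑ s', (P s a s' - Phat s a s') * (V s' - c) := by
      have : ∑ s', (P s a s' - Phat s a s') * (V s' - c)
          = (∑ s', (P s a s' - Phat s a s') * V s') - (∑ s', (P s a s' - Phat s a s')) * c := by
        rw [Finset.sum_mul, ← Finset.sum_sub_distrib]
        exact Finset.sum_congr rfl fun s' _ => by ring
      rw [this, hzero, zero_mul, sub_zero]
    rw [hc]
    calc |∑ s', (P s a s' - Phat s a s') * (V s' - c)|
        ≤ ∑ s', |(P s a s' - Phat s a s') * (V s' - c)| := Finset.abs_sum_le_sum_abs _ _
      _ ≤ ∑ s', |P s a s' - Phat s a s'| * c := by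
          refine Finset.sum_le_sum fun s' _ => ?_
          rw [abs_mul]
          refine mul_le_mul_of_nonneg_left ?_ (abs_nonneg _)
          have h1 := (hVb s').1
          have h2 := (hVb s').2
          rw [← h2c] at h2
          exact abs_le.mpr ⟨by linarith, by linarith⟩
      _ = 2 * tvDist (P s a) (Phat s a) * c := by
          rw [← Finset.sum_mul]; unfold tvDist; ring
      _ ≤ 2 * ε * c := by
          refine mul_le_mul_of_nonneg_right ?_ hc0
          linarith [hεle s a]
      _ = Rmax / (1 - γ) * ε := by rw [← h2c]; ring
  -- bound on the propagation term
  have hterm2 : ∀ s a, |∑ s', Phat s a s' * (V s' - Vhat s')| ≤ Δ := by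
    intro s a
    calc |∑ s', Phat s a s' * (V s' - Vhat s')|
        ≤ ∑ s', |Phat s a s' * (V s' - Vhat s')| := Finset.abs_sum_le_sum_abs _ _
      _ ≤ ∑ s', Phat s a s' * Δ := by
          refine Finset.sum_le_sum fun s' _ => ?_
          rw [abs_mul, abs_of_nonneg ((hPhat s a).1 s')]
          exact mul_le_mul_of_nonneg_left (hΔall s') ((hPhat s a).1 s')
      _ = Δ := by rw [← Finset.sum_mul, (hPhat s a).2, one_mul]
  -- the contraction inequality
  have hkey : Δ ≤ γ * (Rmax / (1 - γ) * ε + Δ) := by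
    calc Δ = |V z - Vhat z| := rfl
      _ = |∑ a, pol z a * γ *
          ((∑ s', (P z a s' - Phat z a s') * V s') + ∑ s', Phat z a s' * (V s' - Vhat s'))| := by
          rw [hdiff z]
      _ ≤ ∑ a, |pol z a * γ *
          ((∑ s', (P z a s' - Phat z a s') * V s') + ∑ s', Phat z a s' * (V s' - Vhat s'))| :=
          Finset.abs_sum_le_sum_abs _ _
      _ ≤ ∑ a, pol z a * γ * (Rmax / (1 - γ) * ε + Δ) := by
          refine Finset.sum_le_sum fun a _ => ?_
          rw [abs_mul, abs_of_nonneg (mul_nonneg ((hpol z).1 a) hγ0.le)]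
          refine mul_le_mul_of_nonneg_left ?_ (mul_nonneg ((hpol z).1 a) hγ0.le)
          calc |(∑ s', (P z a s' - Phat z a s') * V s') + ∑ s', Phat z a s' * (V s' - Vhat s')|
              ≤ |∑ s', (P z a s' - Phat z a s') * V s'|
                + |∑ s', Phat z a s' * (V s' - Vhat s')| := abs_add_le _ _
            _ ≤ Rmax / (1 - γ) * ε + Δ := add_le_add (hterm1 z a) (hterm2 z a)
      _ = γ * (Rmax / (1 - γ) * ε + Δ) := by
          rw [← Finset.sum_mul, ← Finset.sum_mul, (hpol z).2, one_mul]
  -- solve for Δ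
  have hΔbound : Δ ≤ Rmax / (1 - γ) ^ 2 * ε := by
    have h : Δ * (1 - γ) ≤ γ * (Rmax / (1 - γ) * ε) := by nlinarith
    have h2 : Δ * (1 - γ) ^ 2 ≤ γ * (Rmax * ε) := by
      have h3 := mul_le_mul_of_nonneg_right h h1γ.le
      calc Δ * (1 - γ) ^ 2 = Δ * (1 - γ) * (1 - γ) := by ring
        _ ≤ γ * (Rmax / (1 - γ) * ε) * (1 - γ) := h3
        _ = γ * (Rmax * ε) := by field_simp
    rw [div_mul_eq_mul_div, le_div_iff₀ (pow_pos h1γ 2)]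
    nlinarith [mul_nonneg hRmax hε0]
  -- conclude
  calc |(∑ s, ρ₀ s * V s) - ∑ s, ρ₀ s * Vhat s|
      = |∑ s, ρ₀ s * (V s - Vhat s)| := by
        rw [← Finset.sum_sub_distrib]
        congr 1
        exact Finset.sum_congr rfl fun s _ => by ring
    _ ≤ ∑ s, |ρ₀ s * (V s - Vhat s)| := Finset.abs_sum_le_sum_abs _ _
    _ ≤ ∑ s, ρ₀ s * Δ := by
        refine Finset.sum_le_sum fun s _ => ?_
        rw [abs_mul, abs_of_nonneg (hρ.1 s)]
        exact mul_le_mul_of_nonneg_left (hΔall s) (hρ.1 s)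
    _ = Δ := by rw [← Finset.sum_mul, hρ.2, one_mul]
    _ ≤ Rmax / (1 - γ) ^ 2 * ε := hΔbound
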